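/- Let 0 < q, r < p be integers with qr \equiv \pm 1 \pmod p. Then E(p,q) = E(p,r), where E denotes the Euclid complexity (sum of partial quotients of the continued fraction of p/q). -/

import Mathlib

/-- Number of subtractions the subtractive Euclid algorithm takes to convert
the pair `(a, b)` into `(0, 1)`. -/
def euclidE : ℕ → ℕ → ℕ
  | 0, _ => 0
  | _ + 1, 0 => 0
  | a + 1, b + 1 =>
    if b + 1 ≤ a + 1 then 1 + euclidE (a - b) (b + 1)
    else 1 + euclidE (a + 1) (b - a)
termination_by a b => a + b
decreasing_by all_goals omega

/-- The word of steps taken by the subtractive Euclid algorithm. -/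
def eword : ℕ → ℕ → List Bool
  | 0, _ => []
  | _ + 1, 0 => []
  | a + 1, b + 1 =>
    if b + 1 ≤ a + 1 then true :: eword (a - b) (b + 1)
    else false :: eword (a + 1) (b - a)
termination_by a b => a + b
decreasing_by all_goals omega

/-- 2×2 matrices of naturals. -/
structure M2 where
  a : ℕ
  b : ℕ
  c : ℕ
  d : ℕ
deriving DecidableEq

def M2.mul (x y : M2) : M2 :=
  ⟨x.a*y.a + x.b*y.c, x.a*y.b + x.b*y.d, x.c*y.a + x.d*y.c, x.c*y.b + x.d*y.d⟩

def lmat (s : Bool) : M2 := if s then ⟨1,1,0,1⟩ else ⟨1,0,1,1⟩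

def matW : List Bool → M2
  | [] => ⟨1,0,0,1⟩
  | s :: t => (lmat s).mul (matW t)

def EndsR (w : List Bool) : Prop := w.getLast? = some true

lemma matW_true_cons (t : List Bool) :
    matW (true :: t) = ⟨(matW t).a + (matW t).c, (matW t).b + (matW t).d,
      (matW t).c, (matW t).d⟩ := by
  simp [matW, lmat, M2.mul]

lemma matW_false_cons (t : List Bool) :
    matW (false :: t) = ⟨(matW t).a, (matW t).b,
      (matW t).a + (matW t).c, (matW t).b + (matW t).d⟩ := by
  simp [matW, lmat, M2.mul]

lemma endsR_cons {s : Bool} {t : List Bool} (h : EndsR (s :: t)) (ht : t ≠ []) :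
    EndsR t := by
  rw [EndsR, List.getLast?_eq_getLast ht]
  rw [EndsR, List.getLast?_cons, List.getLast?_eq_getLast ht] at h
  simpa using h

lemma M2.mul_assoc (x y z : M2) : (x.mul y).mul z = x.mul (y.mul z) := by
  simp only [M2.mul, M2.mk.injEq]
  refine ⟨by ring, by ring, by ring, by ring⟩

lemma matW_append (u v : List Bool) : matW (u ++ v) = (matW u).mul (matW v) := by
  induction u with
  | nil =>
    simp only [List.nil_append, matW, M2.mul]
    cases matW v with
    | mk a b c d => simp
  | cons x xs ihu =>
    show (lmat x).mul (matW (xs ++ v)) = ((lmat x).mul (matW xs)).mul (matW v)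
    rw [ihu, M2.mul_assoc]

lemma endsR_singleton {s : Bool} (h : EndsR [s]) : s = true := by
  simpa [EndsR] using h

/-- determinant is 1 -/
lemma matW_det (w : List Bool) :
    (matW w).a * (matW w).d = (matW w).b * (matW w).c + 1 := by
  induction w with
  | nil => simp [matW]
  | cons s t ih =>
    cases s
    · rw [matW_false_cons]; dsimp only
      nlinarith [ih]
    · rw [matW_true_cons]; dsimp only
      nlinarith [ih]

/-- column bounds for words ending in R -/
lemma matW_bound {w : List Bool} (h : EndsR w) :
    (matW w).a ≤ (matW w).b ∧ (matW w).c ≤ (matW w).d := by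
  induction w with
  | nil => simp [EndsR] at h
  | cons s t ih =>
    rcases eq_or_ne t [] with rfl | ht
    · have := endsR_singleton h; subst this
      simp [matW, lmat, M2.mul]
    · have h' := endsR_cons h ht
      have := ih h'
      cases s
      · rw [matW_false_cons]; dsimp only; omega
      · rw [matW_true_cons]; dsimp only; omega

lemma matW_pos {w : List Bool} (h : EndsR w) :
    1 ≤ (matW w).b ∧ 1 ≤ (matW w).d := by
  have hdet := matW_det w
  have hb := matW_bound h
  constructor
  · by_contra hc
    push_neg at hc
    have hb0 : (matW w).b = 0 := by omega
    have ha0 : (matW w).a = 0 := by omega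
    rw [ha0, hb0] at hdet
    simp at hdet
  · by_contra hc
    push_neg at hc
    have hd0 : (matW w).d = 0 := by omega
    rw [hd0, Nat.mul_zero] at hdet
    simp at hdet

lemma matW_reverse (w : List Bool) :
    matW w.reverse = ⟨(matW w).d, (matW w).b, (matW w).c, (matW w).a⟩ := by
  induction w with
  | nil => simp [matW]
  | cons s t ih =>
    rw [List.reverse_cons, matW_append, ih]
    cases s <;>
      simp only [matW, lmat, M2.mul, matW_false_cons, matW_true_cons,
        Bool.cond_true, Bool.cond_false, if_true, if_false, M2.mk.injEq,
        Bool.false_eq_true, ite_false, ite_true] <;>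
      refine ⟨by omega, by omega, by omega, by omega⟩

/-- the word of the algorithm represents the pair, and ends in an R step -/
lemma eword_spec : ∀ n p q, p + q ≤ n → 0 < p → 0 < q → Nat.gcd p q = 1 →
    (matW (eword p q)).b = p ∧ (matW (eword p q)).d = q ∧ EndsR (eword p q) := by
  intro n
  induction n with
  | zero =>
    intro p q h hp hq _
    exfalso
    have h0 : p + q ≤ 0 := h
    omega
  | succ n ih =>
    intro p q h hp hq hg
    obtain ⟨a, rfl⟩ := Nat.exists_eq_add_of_lt hp
    obtain ⟨b, rfl⟩ := Nat.exists_eq_add_of_lt hq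
    simp only [Nat.zero_add] at *
    rcases lt_trichotomy (a) (b) with hab | hab | hab
    · -- p < q : L step
      have hw : eword (a+1) (b+1) = false :: eword (a+1) (b-a) := by
        rw [eword]; simp [Nat.not_le.2 (by omega : a + 1 < b + 1)]
      have hg' : Nat.gcd (a+1) (b-a) = 1 := by
        have := Nat.gcd_sub_self_right (m := a+1) (n := b+1) (by omega)
        rw [Nat.gcd_comm] at hg ⊢
        rw [show b - a = b + 1 - (a+1) by omega]
        rw [Nat.gcd_sub_self_left (by omega)]
        rw [Nat.gcd_comm] at hg
        rw [Nat.gcd_comm]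
        exact hg
      obtain ⟨h1, h2, h3⟩ := ih (a+1) (b-a) (by omega) (by omega) (by omega) hg'
      refine ⟨?_, ?_, ?_⟩
      · rw [hw, matW_false_cons]; dsimp only; omega
      · rw [hw, matW_false_cons]; dsimp only; omega
      · rw [hw]
        rcases List.eq_nil_or_concat (eword (a+1) (b-a)) with hnil | ⟨l, x, hx⟩
        · rw [hnil] at h3; simp [EndsR] at h3
        · rw [EndsR] at h3 ⊢
          rw [hx, List.concat_eq_append] at h3 ⊢
          rw [show (false : Bool) :: (l ++ [x]) = (false :: l) ++ [x] from rfl,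
            List.getLast?_concat]
          rw [List.getLast?_concat] at h3
          exact h3
    · -- p = q : gcd forces both 1
      subst hab
      have : a = 0 := by
        have := Nat.gcd_self (a+1); omega
      subst this
      have hw : eword 1 1 = [true] := by
        rw [eword]; simp only [le_refl, if_true, Nat.sub_self]
        rw [eword]
      rw [hw]
      refine ⟨by simp [matW, lmat, M2.mul], by simp [matW, lmat, M2.mul], by simp [EndsR]⟩
    · -- p > q : R step
      have hw : eword (a+1) (b+1) = true :: eword (a-b) (b+1) := by
        rw [eword]; simp [Nat.le_of_lt (by omega : b + 1 < a + 1)]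
      have hg' : Nat.gcd (a-b) (b+1) = 1 := by
        rw [show a - b = a + 1 - (b+1) by omega]
        rw [Nat.gcd_sub_self_left (by omega)]
        exact hg
      obtain ⟨h1, h2, h3⟩ := ih (a-b) (b+1) (by omega) (by omega) (by omega) hg'
      refine ⟨?_, ?_, ?_⟩
      · rw [hw, matW_true_cons]; dsimp only; omega
      · rw [hw, matW_true_cons]; dsimp only; omega
      · rw [hw]
        rcases List.eq_nil_or_concat (eword (a-b) (b+1)) with hnil | ⟨l, x, hx⟩
        · rw [hnil] at h3; simp [EndsR] at h3
        · rw [EndsR] at h3 ⊢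
          rw [hx, List.concat_eq_append] at h3 ⊢
          rw [show (true : Bool) :: (l ++ [x]) = (true :: l) ++ [x] from rfl,
            List.getLast?_concat]
          rw [List.getLast?_concat] at h3
          exact h3

/-- uniqueness: a word ending in R is determined by the second column of its matrix -/
lemma matW_uniq : ∀ n (w w' : List Bool), w.length ≤ n → EndsR w → EndsR w' →
    (matW w).b = (matW w').b → (matW w).d = (matW w').d → w = w' := by
  intro n
  induction n with
  | zero =>
    intro w w' hlen hw hw' _ _
    have : w = [] := List.eq_nil_of_length_eq_zero (by omega)
    subst this
    simp [EndsR] at hw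
  | succ n ih =>
    intro w w' hlen hw hw' hb hd
    -- classification helper
    have key : ∀ (v : List Bool), EndsR v →
        (v = [true] ∧ (matW v).b = 1 ∧ (matW v).d = 1) ∨
        (∃ t, v = true :: t ∧ EndsR t ∧ (matW v).b = (matW t).b + (matW t).d ∧
          (matW v).d = (matW t).d ∧ (matW v).d < (matW v).b) ∨
        (∃ t, v = false :: t ∧ EndsR t ∧ (matW v).b = (matW t).b ∧
          (matW v).d = (matW t).b + (matW t).d ∧ (matW v).b < (matW v).d) := by
      intro v hv
      match v with
      | [] => simp [EndsR] at hv
      | s :: t =>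
        rcases eq_or_ne t [] with rfl | ht
        · have := endsR_singleton hv; subst this
          left; exact ⟨rfl, by simp [matW, lmat, M2.mul], by simp [matW, lmat, M2.mul]⟩
        · have h' := endsR_cons hv ht
          have hp := matW_pos h'
          cases s
          · right; right
            exact ⟨t, rfl, h', by rw [matW_false_cons], by rw [matW_false_cons], by
              rw [matW_false_cons]; dsimp only; omega⟩
          · right; left
            exact ⟨t, rfl, h', by rw [matW_true_cons], by rw [matW_true_cons], by
              rw [matW_true_cons]; dsimp only; omega⟩
    rcases key w hw with ⟨rfl, h1, h2⟩ | ⟨t, rfl, het, hb1, hd1, hlt⟩ | ⟨t, rfl, het, hb1, hd1, hlt⟩ <;>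
      rcases key w' hw' with ⟨rfl, h1', h2'⟩ | ⟨t', rfl, het', hb1', hd1', hlt'⟩ | ⟨t', rfl, het', hb1', hd1', hlt'⟩
    · rfl
    · omega
    · omega
    · omega
    · have : t = t' := by
        apply ih t t' (by simp at hlen; omega) het het' <;> omega
      rw [this]
    · omega
    · omega
    · omega
    · have : t = t' := by
        apply ih t t' (by simp at hlen; omega) het het' <;> omega
      rw [this]

lemma euclidE_eq_length : ∀ n p q, p + q ≤ n → euclidE p q = (eword p q).length := by
  intro n
  induction n with
  | zero =>
    intro p q h
    have : p = 0 := by omega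
    subst this; simp [euclidE, eword]
  | succ n ih =>
    intro p q h
    match p, q with
    | 0, q => simp [euclidE, eword]
    | p+1, 0 => simp [euclidE, eword]
    | p+1, q+1 =>
      rw [euclidE, eword]
      by_cases hc : q + 1 ≤ p + 1
      · simp only [if_pos hc, List.length_cons]
        rw [ih (p - q) (q+1) (by omega)]; omega
      · simp only [if_neg hc, List.length_cons]
        rw [ih (p+1) (q - p) (by omega)]; omega

lemma euclidE_comm : ∀ n p q, p + q ≤ n → euclidE p q = euclidE q p := by
  intro n
  induction n with
  | zero => intro p q h; have : p = 0 ∧ q = 0 := by omega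
            obtain ⟨rfl, rfl⟩ := this; rfl
  | succ n ih =>
    intro p q h
    match p, q with
    | 0, 0 => rfl
    | 0, q+1 => simp [euclidE]
    | p+1, 0 => simp [euclidE]
    | p+1, q+1 =>
      rw [euclidE, euclidE]
      rcases lt_trichotomy p q with hc | rfl | hc
      · rw [if_neg (by omega), if_pos (by omega)]
        rw [ih (p+1) (q-p) (by omega)]
      · rw [if_pos (by omega)]
      · rw [if_pos (by omega), if_neg (by omega)]
        rw [ih (p-q) (q+1) (by omega)]

lemma euclidE_complement {p q : ℕ} (h0 : 0 < q) (h1 : q < p) :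
    euclidE p q = euclidE p (p - q) := by
  obtain ⟨a, rfl⟩ := Nat.exists_eq_add_of_lt h1
  obtain ⟨b, rfl⟩ := Nat.exists_eq_add_of_lt h0
  simp only [Nat.zero_add] at *
  have e1 : euclidE (b + 1 + a + 1) (b+1) = 1 + euclidE (a + 1) (b + 1) := by
    rw [euclidE]
    rw [if_pos (by omega)]
    congr 1
    congr 1
    omega
  have hsub : (b + 1 + a + 1) - (b + 1) = a + 1 := by omega
  rw [hsub]
  have e2 : euclidE (b + 1 + a + 1) (a+1) = 1 + euclidE (b + 1) (a + 1) := by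
    rw [euclidE]
    rw [if_pos (by omega)]
    congr 1
    congr 1
    omega
  rw [e1, e2, euclidE_comm (a+1+(b+1)) (a+1) (b+1) le_rfl]

lemma dvd_eq_zero_of_bounds {p x : ℤ} (hp : 0 < p) (hd : p ∣ x) (h1 : -p < x) (h2 : x < p) :
    x = 0 := by
  obtain ⟨m, rfl⟩ := hd
  have h3 : -1 < m := by
    by_contra hc; push_neg at hc
    have : p * m ≤ p * (-1) := mul_le_mul_of_nonneg_left hc (le_of_lt hp)
    linarith
  have h4 : m < 1 := by
    by_contra hc; push_neg at hc
    have : p * 1 ≤ p * m := mul_le_mul_of_nonneg_left hc (le_of_lt hp)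
    linarith
  have hm : m = 0 := by omega
  rw [hm, mul_zero]

lemma dvd_eq_of_bounds {p x : ℤ} (hp : 0 < p) (hd : p ∣ x) (h1 : 0 < x) (h2 : x < 2*p) :
    x = p := by
  obtain ⟨m, rfl⟩ := hd
  have h3 : 0 < m := by
    by_contra hc; push_neg at hc
    have : p * m ≤ p * 0 := mul_le_mul_of_nonneg_left hc (le_of_lt hp)
    linarith
  have h4 : m < 2 := by
    by_contra hc; push_neg at hc
    have : p * 2 ≤ p * m := mul_le_mul_of_nonneg_left hc (le_of_lt hp)
    linarith
  have hm : m = 1 := by omega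
  rw [hm, mul_one]

/-- Theorem 3: if `0 < q, r < p` and `q·r ≡ ±1 (mod p)`,
then `E(p,q) = E(p,r)`. -/
theorem euclidE_eq_of_mul_congr_pm_one (p q r : ℕ) (hq : 0 < q) (hqp : q < p)
    (hr : 0 < r) (hrp : r < p)
    (h : (q * r : ℤ) ≡ 1 [ZMOD (p : ℤ)] ∨ (q * r : ℤ) ≡ -1 [ZMOD (p : ℤ)]) :
    euclidE p q = euclidE p r := by
  -- gcd p q = 1
  have hdvd : ∃ k : ℤ, (q : ℤ) * r - k * p = 1 ∨ (q : ℤ) * r - k * p = -1 := by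
    rcases h with h | h
    · obtain ⟨k, hk⟩ := (Int.ModEq.dvd h)
      exact ⟨-k, by left; linarith⟩
    · obtain ⟨k, hk⟩ := (Int.ModEq.dvd h)
      exact ⟨-k, by right; linarith⟩
  have hgcd : Nat.gcd p q = 1 := by
    obtain ⟨k, hk | hk⟩ := hdvd
    · have : IsCoprime (p : ℤ) (q : ℤ) := ⟨-k, r, by linarith⟩
      exact Nat.Coprime.gcd_eq_one ((Nat.isCoprime_iff_coprime.mp this).symm).symm
    · have : IsCoprime (p : ℤ) (q : ℤ) := ⟨k, -r, by linarith⟩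
      exact Nat.Coprime.gcd_eq_one ((Nat.isCoprime_iff_coprime.mp this).symm).symm
  obtain ⟨hwb, hwd, hwE⟩ := eword_spec (p + q) p q le_rfl (by omega) hq hgcd
  obtain ⟨A, hA⟩ : ∃ x, (matW (eword p q)).a = x := ⟨_, rfl⟩
  obtain ⟨C, hC⟩ : ∃ x, (matW (eword p q)).c = x := ⟨_, rfl⟩
  have hdet : A * q = p * C + 1 := by
    have := matW_det (eword p q)
    rw [hwb, hwd, hA, hC] at this
    omega
  have hbnd := matW_bound hwE
  have hAlep : A ≤ p := by
    have := hbnd.1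
    rw [hA, hwb] at this
    exact this
  have hApos : 1 ≤ A := by nlinarith
  have hAltp : A < p := by
    rcases lt_or_eq_of_le hAlep with h' | h'
    · exact h'
    · exfalso
      rw [h'] at hdet
      have hq1 : C < q := by nlinarith
      nlinarith
  have hgcdA : Nat.gcd p A = 1 := by
    have : IsCoprime (p : ℤ) (A : ℤ) := ⟨-C, q, by linarith [hdet]⟩
    exact Nat.Coprime.gcd_eq_one ((Nat.isCoprime_iff_coprime.mp this).symm).symm
  -- the reversed word computes (p, A)
  have hrev := matW_reverse (eword p q)
  have hrevb : (matW (eword p q).reverse).b = p := by rw [hrev]; exact hwb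
  have hrevd : (matW (eword p q).reverse).d = A := by rw [hrev]; exact hA
  have hrevE : EndsR (eword p q).reverse := by
    unfold EndsR
    rw [List.getLast?_reverse]
    have hhd : eword p q = true :: eword (p - q) q := by
      obtain ⟨a, rfl⟩ := Nat.exists_eq_add_of_lt hqp
      obtain ⟨b, rfl⟩ := Nat.exists_eq_add_of_lt hq
      rw [eword]
      rw [if_pos (by omega)]
      simp only [Nat.zero_add]
      congr 2
      omega
    rw [hhd]; rfl
  obtain ⟨hab, had, haE⟩ := eword_spec (p + A) p A le_rfl (by omega) (by omega) hgcdA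
  have huniq : eword p A = (eword p q).reverse := by
    apply matW_uniq (eword p A).length _ _ le_rfl haE hrevE <;> omega
  have hEA : euclidE p q = euclidE p A := by
    rw [euclidE_eq_length (p+q) p q le_rfl, euclidE_eq_length (p+A) p A le_rfl,
      huniq, List.length_reverse]
  -- now identify r with A or p - A
  have hdetZ : (A:ℤ) * q = (p:ℤ) * C + 1 := by exact_mod_cast hdet
  have hcop : IsCoprime (p:ℤ) (q:ℤ) := ⟨-C, A, by linarith⟩
  have hppos : (0:ℤ) < p := by exact_mod_cast (by omega : 0 < p)
  have hb1 : (r:ℤ) < p := by exact_mod_cast hrp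
  have hb2 : (A:ℤ) < p := by exact_mod_cast hAltp
  have hb3 : (1:ℤ) ≤ A := by exact_mod_cast hApos
  have hb4 : (1:ℤ) ≤ r := by exact_mod_cast hr
  obtain ⟨k, hk | hk⟩ := hdvd
  · -- q r ≡ 1 : r = A
    have h2 : (p:ℤ) ∣ (q:ℤ) * ((r:ℤ) - A) := ⟨k - C, by linear_combination hk - hdetZ⟩
    have h3 : (p:ℤ) ∣ (r:ℤ) - A := hcop.dvd_of_dvd_mul_left h2
    have h0 : (r:ℤ) - A = 0 :=
      dvd_eq_zero_of_bounds hppos h3 (by linarith) (by linarith)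
    have hra : r = A := by exact_mod_cast sub_eq_zero.mp h0
    rw [hEA, hra]
  · -- q r ≡ -1 : r = p - A
    have h2 : (p:ℤ) ∣ (q:ℤ) * ((r:ℤ) + A) := ⟨k + C, by linear_combination hk + hdetZ⟩
    have h3 : (p:ℤ) ∣ (r:ℤ) + A := hcop.dvd_of_dvd_mul_left h2
    have h0 : (r:ℤ) + A = p :=
      dvd_eq_of_bounds hppos h3 (by linarith) (by linarith)
    have hrpa : r = p - A := by
      have : r + A = p := by exact_mod_cast h0
      omega
    rw [hEA, hrpa, ← euclidE_complement hApos hAltp]
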